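/- In the upper half-plane model of the hyperbolic plane, let r be a geodesic parametrized by arclength, and for each t let η_t be the geodesic through r(t) orthogonal to r. Let l be another geodesic disjoint from r and lying on one side of r, and let h(t) be the length of the segment of η_t between r and l. Then the hyperbolic area of the region U bounded by r, l, η_{t₀−δ} and η_{t₀+δ} satisfies Area(U) ≥ 2δ·h(t₀). -/

import Mathlib

open MeasureTheory Set

/-- Hyperbolic trapezium area estimate in the upper half-plane model.  `r` is a geodesic
parametrized by arclength, `φ` are Fermi coordinates based on `r` (mapping each vertical
line `{x = t}` isometrically onto the geodesic `η_t` orthogonal to `r` at `r(t)`, and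
expanding areas: the hyperbolic area measure `μ` of an image dominates the Euclidean
area).  `l` is a geodesic disjoint from `r` on one side of `r`, at distance `h(t)` from
`r` along `η_t`, where `h` is convex and positive.  Then the hyperbolic area of the
region `U` bounded by `r`, `l`, `η_{t₀−δ}`, `η_{t₀+δ}` is at least `2δ·h(t₀)`. -/
theorem statement_7 [MeasurableSpace UpperHalfPlane] [BorelSpace UpperHalfPlane]
    (μ : Measure UpperHalfPlane)
    (r : ℝ → UpperHalfPlane) (hr : ∀ s t : ℝ, dist (r s) (r t) = |s - t|)
    (φ : ℝ × ℝ → UpperHalfPlane)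
    (hφ0 : ∀ t : ℝ, φ (t, 0) = r t)
    (hφinj : Function.Injective φ)
    (hφvert : ∀ t s s' : ℝ, dist (φ (t, s)) (φ (t, s')) = |s - s'|)
    (hφarea : ∀ T : Set (ℝ × ℝ), MeasurableSet T → volume T ≤ μ (φ '' T))
    (l : Set UpperHalfPlane) (hlr : Disjoint l (range r))
    (h : ℝ → ℝ) (hconv : ConvexOn ℝ Set.univ h) (hpos : ∀ t, 0 < h t)
    (hl : ∀ t : ℝ, φ (t, h t) ∈ l)
    (t₀ δ : ℝ) (hδ : 0 < δ)
    (U : Set UpperHalfPlane)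
    (hU : U = φ '' {p : ℝ × ℝ | p.1 ∈ Ioo (t₀ - δ) (t₀ + δ) ∧ p.2 ∈ Ioo 0 (h p.1)}) :
    ENNReal.ofReal (2 * δ * h t₀) ≤ μ U := by
  have hcont : Continuous h := by
    have := hconv.continuousOn isOpen_univ
    rwa [← continuousOn_univ]
  set T : Set (ℝ × ℝ) := {p : ℝ × ℝ | p.1 ∈ Ioo (t₀ - δ) (t₀ + δ) ∧ p.2 ∈ Ioo 0 (h p.1)}
  have hTeq : T = regionBetween (fun _ => (0:ℝ)) h (Ioo (t₀ - δ) (t₀ + δ)) := by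
    ext p; simp [regionBetween, T, and_comm]
  have hTm : MeasurableSet T := by
    rw [hTeq]
    exact measurableSet_regionBetween measurable_const hcont.measurable measurableSet_Ioo
  have hint : IntegrableOn h (Ioo (t₀ - δ) (t₀ + δ)) volume :=
    (hcont.continuousOn.integrableOn_compact isCompact_Icc).mono_set Ioo_subset_Icc_self
  have hvol : volume T = ENNReal.ofReal (∫ t in Ioo (t₀ - δ) (t₀ + δ), h t) := by
    rw [hTeq, Measure.volume_eq_prod,
      volume_regionBetween_eq_integral (integrableOn_const measure_Ioo_lt_top.ne)
        hint measurableSet_Ioo (fun x _ => (hpos x).le)]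
    simp
  have hjensen : 2 * δ * h t₀ ≤ ∫ t in Ioo (t₀ - δ) (t₀ + δ), h t := by
    have hab : t₀ - δ ≤ t₀ + δ := by linarith
    rw [← MeasureTheory.integral_Ioc_eq_integral_Ioo, ← intervalIntegral.integral_of_le hab]
    have key : ∫ s in t₀..(t₀ + δ), h (2 * t₀ - s) = ∫ t in (t₀ - δ)..t₀, h t := by
      rw [intervalIntegral.integral_comp_sub_left h (2 * t₀)]
      ring_nf
    have h1 : ∫ t in (t₀ - δ)..(t₀ + δ), h t
        = ∫ s in t₀..(t₀ + δ), (h s + h (2 * t₀ - s)) := by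
      rw [intervalIntegral.integral_add]
      · rw [key, ← intervalIntegral.integral_add_adjacent_intervals
          (a := t₀ - δ) (b := t₀) (c := t₀ + δ)]
        · ring_nf
        · exact (hcont.intervalIntegrable _ _)
        · exact (hcont.intervalIntegrable _ _)
      · exact (hcont.intervalIntegrable _ _)
      · exact ((hcont.comp (by continuity)).intervalIntegrable _ _)
    rw [h1]
    have h2 : ∀ s : ℝ, 2 * h t₀ ≤ h s + h (2 * t₀ - s) := by
      intro s
      have := hconv.2 (mem_univ s) (mem_univ (2 * t₀ - s))
        (by norm_num : (0:ℝ) ≤ 1/2) (by norm_num : (0:ℝ) ≤ 1/2) (by norm_num)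
      simp only [smul_eq_mul] at this
      have he : (1/2 : ℝ) * s + (1/2 : ℝ) * (2 * t₀ - s) = t₀ := by ring
      rw [he] at this
      linarith
    calc 2 * δ * h t₀ = ∫ _s in t₀..(t₀ + δ), 2 * h t₀ := by
          rw [intervalIntegral.integral_const]; simp [smul_eq_mul]; ring
      _ ≤ _ := by
          apply intervalIntegral.integral_mono_on (by linarith)
            (intervalIntegrable_const)
            (((hcont.intervalIntegrable _ _).add
              ((hcont.comp (by continuity)).intervalIntegrable _ _)))
          intro x _; exact h2 x
  calc ENNReal.ofReal (2 * δ * h t₀) ≤ volume T := by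
        rw [hvol]; exact ENNReal.ofReal_le_ofReal hjensen
    _ ≤ μ (φ '' T) := hφarea T hTm
    _ = μ U := by rw [hU]
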